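/- For every integer i ≥ 1, every real β, and every t ∈ (0,1), the function t ↦ X_i(t)^β is differentiable at t with derivative (d/dt) X_i(t)^β = (β/t) X₁(t) X₂(t) ⋯ X_{i−1}(t) X_i(t)^{β+1}, where the empty product (case i = 1) is interpreted as 1. -/

import Mathlib

open MeasureTheory Real

/-- `X1 t = (1 - log t)⁻¹`, the first iterated logarithm. -/
noncomputable def X1 (t : ℝ) : ℝ := (1 - Real.log t)⁻¹

/-- `Xi i` is the paper's `X_i` for `i ≥ 1` (`Xi 0` is the identity placeholder);
`X_i = X_1 ∘ X_{i-1}`. -/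
noncomputable def Xi : ℕ → ℝ → ℝ
  | 0, t => t
  | n+1, t => X1 (Xi n t)


lemma X1_mem (t : ℝ) (ht : t ∈ Set.Ioo (0:ℝ) 1) : X1 t ∈ Set.Ioo (0:ℝ) 1 := by
  obtain ⟨ht0, ht1⟩ := ht
  have hlog : Real.log t < 0 := Real.log_neg ht0 ht1
  have h1 : (1:ℝ) < 1 - Real.log t := by linarith
  constructor
  · exact inv_pos.mpr (by linarith)
  · rw [X1, inv_lt_one_iff₀]; right; exact h1

lemma Xi_mem (i : ℕ) (t : ℝ) (ht : t ∈ Set.Ioo (0:ℝ) 1) : Xi i t ∈ Set.Ioo (0:ℝ) 1 := by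
  induction i with
  | zero => exact ht
  | succ n ih => exact X1_mem _ ih

lemma hasDerivAt_X1 (t : ℝ) (ht : t ∈ Set.Ioo (0:ℝ) 1) :
    HasDerivAt X1 (1 / t * X1 t ^ 2) t := by
  obtain ⟨ht0, ht1⟩ := ht
  have hlog : Real.log t < 0 := Real.log_neg ht0 ht1
  have hne : 1 - Real.log t ≠ 0 := by linarith
  have h := ((Real.hasDerivAt_log (ne_of_gt ht0)).const_sub 1).inv hne
  refine h.congr_deriv ?_
  rw [X1]
  field_simp

lemma hasDerivAt_Xi (i : ℕ) (hi : 1 ≤ i) (t : ℝ) (ht : t ∈ Set.Ioo (0:ℝ) 1) :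
    HasDerivAt (Xi i)
      (1 / t * (∏ j ∈ Finset.range (i-1), Xi (j+1) t) * Xi i t ^ 2) t := by
  induction i, hi using Nat.le_induction with
  | base =>
    have h1 : Xi 1 = X1 := rfl
    simpa [h1] using hasDerivAt_X1 t ht
  | succ n hn ih =>
    have hx := Xi_mem n t ht
    have hcomp := (hasDerivAt_X1 (Xi n t) hx).comp t ih
    have hXi : Xi (n+1) t = X1 (Xi n t) := rfl
    refine hcomp.congr_deriv ?_
    have hxne : Xi n t ≠ 0 := ne_of_gt hx.1
    have hsplit : (∏ j ∈ Finset.range (n+1-1), Xi (j+1) t)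
        = (∏ j ∈ Finset.range (n-1), Xi (j+1) t) * Xi n t := by
      obtain ⟨m, rfl⟩ := Nat.exists_eq_add_of_le hn
      simp [Nat.add_comm 1 m, Finset.prod_range_succ]
    rw [hsplit, hXi]
    have htne : t ≠ 0 := ne_of_gt ht.1
    field_simp

/-- The differentiation rule (7) of the paper:
`(d/dt) X_i(t)^β = (β/t) X₁(t)⋯X_{i−1}(t) X_i(t)^{β+1}` for `t ∈ (0,1)`. -/
theorem hasDerivAt_Xi_rpow
    (i : ℕ) (hi : 1 ≤ i) (β : ℝ) (t : ℝ) (ht : t ∈ Set.Ioo (0:ℝ) 1) :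
    HasDerivAt (fun s => Xi i s ^ β)
      (β / t * (∏ j ∈ Finset.range (i-1), Xi (j+1) t) * Xi i t ^ (β + 1)) t := by
  have hx := Xi_mem i t ht
  have hxne : Xi i t ≠ 0 := ne_of_gt hx.1
  have h := (hasDerivAt_Xi i hi t ht).rpow_const (p := β) (Or.inl hxne)
  convert h using 1
  have h2 : Xi i t ^ (2:ℕ) * Xi i t ^ (β - 1) = Xi i t ^ (β + 1) := by
    rw [← Real.rpow_natCast (Xi i t) 2, ← Real.rpow_add hx.1]
    norm_num
    ring_nf
  calc β / t * (∏ j ∈ Finset.range (i-1), Xi (j+1) t) * Xi i t ^ (β + 1)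
      = β / t * (∏ j ∈ Finset.range (i-1), Xi (j+1) t) *
        (Xi i t ^ (2:ℕ) * Xi i t ^ (β - 1)) := by rw [h2]
    _ = 1 / t * (∏ j ∈ Finset.range (i-1), Xi (j+1) t) * Xi i t ^ 2 * β
        * Xi i t ^ (β - 1) := by ring
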